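/- For every Polish group H there exist a separable real Banach space E and an injective group homomorphism Θ : H → Iso_L(E) into the group of surjective linear isometries of E, such that Θ is a homeomorphism onto its image when Iso_L(E) carries the topology of pointwise convergence. -/

import Mathlib

universe u

open Filter Topology Set Uniformity BoundedContinuousFunction

/-- The topology of pointwise convergence on the group of surjective linear isometries of
a normed space. -/
def linIsoPtTop (E : Type*) [NormedAddCommGroup E] [NormedSpace ℝ E] :
    TopologicalSpace (E ≃ₗᵢ[ℝ] E) :=
  TopologicalSpace.induced (fun φ : E ≃ₗᵢ[ℝ] E => (φ : E → E)) inferInstance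

set_option linter.unusedSectionVars false

structure GoodMetric (H : Type u) [TopologicalSpace H] [Group H] : Type u where
  d : H → H → ℝ
  nonneg : ∀ x y, 0 ≤ d x y
  refl : ∀ x, d x x = 0
  symm : ∀ x y, d x y = d y x
  triangle : ∀ x y z, d x z ≤ d x y + d y z
  le_one : ∀ x y, d x y ≤ 1
  rightInv : ∀ x y g, d (x * g) (y * g) = d x y
  small : ∀ ε > (0:ℝ), ∃ V ∈ 𝓝 (1:H), ∀ x y : H, y / x ∈ V → d x y < ε
  big : ∀ V ∈ 𝓝 (1:H), ∃ ε > (0:ℝ), ∀ x y : H, d x y < ε → y / x ∈ V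
  pos : ∀ x y : H, x ≠ y → 0 < d x y

theorem exists_goodMetric (H : Type u) [TopologicalSpace H] [Group H] [IsTopologicalGroup H]
    [FirstCountableTopology H] [T1Space H] : Nonempty (GoodMetric H) := by
  classical
  haveI hcg : (𝓝 (1:H)).IsCountablyGenerated := inferInstance
  letI U : UniformSpace H := IsTopologicalGroup.rightUniformSpace H
  have hUeq : (𝓤 H) = comap (fun p : H × H => p.2 / p.1) (𝓝 (1:H)) := by simp_rw [div_eq_mul_inv]; rfl
  haveI : (𝓤 H).IsCountablyGenerated := by rw [hUeq]; exact Filter.comap.isCountablyGenerated _ _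
  obtain ⟨I, hI⟩ := UniformSpace.metrizable_uniformity H
  set ρ : H → H → ℝ := @dist H I.toDist with hρ
  have hb : (@uniformity H I.toUniformSpace).HasBasis (fun ε : ℝ => 0 < ε)
      (fun ε => {p : H × H | ρ p.1 p.2 < ε}) := @Metric.uniformity_basis_dist H I
  rw [hI, hUeq] at hb
  -- basic metric facts for ρ
  have ρ_nonneg : ∀ x y, 0 ≤ ρ x y := fun x y => @dist_nonneg H I x y
  have ρ_self : ∀ x, ρ x x = 0 := fun x => I.dist_self x
  have ρ_comm : ∀ x y, ρ x y = ρ y x := fun x y => I.dist_comm x y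
  have ρ_tri : ∀ x y z, ρ x z ≤ ρ x y + ρ y z := fun x y z => I.dist_triangle x y z
  -- the sup-metric
  set d : H → H → ℝ := fun x y => ⨆ z : H, min (ρ (x * z) (y * z)) 1 with hd
  have hbdd : ∀ x y : H, BddAbove (Set.range fun z : H => min (ρ (x * z) (y * z)) 1) := by
    intro x y
    exact ⟨1, by rintro _ ⟨z, rfl⟩; exact min_le_right _ _⟩
  have hle : ∀ x y z : H, min (ρ (x * z) (y * z)) 1 ≤ d x y := by
    intro x y z
    exact le_ciSup (hbdd x y) z
  have h_le_one : ∀ x y, d x y ≤ 1 := by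
    intro x y
    exact ciSup_le fun z => min_le_right _ _
  have h_nonneg : ∀ x y, 0 ≤ d x y := by
    intro x y
    exact Real.iSup_nonneg fun z => le_min (ρ_nonneg _ _) zero_le_one
  have h_refl : ∀ x, d x x = 0 := by
    intro x
    have : (fun z : H => min (ρ (x * z) (x * z)) 1) = fun _ : H => (0:ℝ) := by
      funext z; simp [ρ_self]
    simp only [hd, this, ciSup_const]
  have h_symm : ∀ x y, d x y = d y x := by
    intro x y
    simp only [hd]
    congr 1; funext z; rw [ρ_comm]
  have minadd : ∀ a b : ℝ, 0 ≤ a → 0 ≤ b → min (a + b) 1 ≤ min a 1 + min b 1 := by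
    intro a b ha hb
    rcases le_total a 1 with h1 | h1
    · rcases le_total b 1 with h2 | h2
      · rw [min_eq_left h1, min_eq_left h2]; exact min_le_left _ _
      · rw [min_eq_right h2]
        have : min (a+b) 1 ≤ 1 := min_le_right _ _
        nlinarith [le_min ha zero_le_one]
    · rw [min_eq_right h1]
      have : min (a+b) 1 ≤ 1 := min_le_right _ _
      nlinarith [le_min hb zero_le_one]
  have h_tri : ∀ x y z, d x z ≤ d x y + d y z := by
    intro x y z
    refine ciSup_le fun w => ?_
    calc min (ρ (x * w) (z * w)) 1 ≤ min (ρ (x * w) (y * w) + ρ (y * w) (z * w)) 1 :=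
          min_le_min (ρ_tri _ _ _) le_rfl
      _ ≤ min (ρ (x * w) (y * w)) 1 + min (ρ (y * w) (z * w)) 1 :=
          minadd _ _ (ρ_nonneg _ _) (ρ_nonneg _ _)
      _ ≤ d x y + d y z := add_le_add (hle _ _ _) (hle _ _ _)
  have h_rinv : ∀ x y g, d (x * g) (y * g) = d x y := by
    intro x y g
    have hsurj : Function.Surjective (fun z : H => g * z) := (Equiv.mulLeft g).surjective
    calc d (x * g) (y * g) = ⨆ z : H, min (ρ (x * g * z) (y * g * z)) 1 := rfl
      _ = ⨆ z : H, min (ρ (x * (g * z)) (y * (g * z))) 1 := by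
          congr 1; funext z; rw [mul_assoc, mul_assoc]
      _ = ⨆ z : H, min (ρ (x * z) (y * z)) 1 :=
          hsurj.iSup_comp (fun z => min (ρ (x * z) (y * z)) 1)
  have h_small : ∀ ε > (0:ℝ), ∃ V ∈ 𝓝 (1:H), ∀ x y : H, y / x ∈ V → d x y < ε := by
    intro ε hε
    have hmem : {p : H × H | ρ p.1 p.2 < ε/2} ∈ comap (fun p : H × H => p.2 / p.1) (𝓝 (1:H)) :=
      hb.mem_of_mem (by linarith)
    obtain ⟨V, hV, hVsub⟩ := mem_comap.1 hmem
    refine ⟨V, hV, fun x y hxy => ?_⟩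
    have hall : ∀ z : H, min (ρ (x * z) (y * z)) 1 ≤ ε/2 := by
      intro z
      have hz : (y * z) / (x * z) ∈ V := by
        have : (y * z) / (x * z) = y / x := by
          simp [div_eq_mul_inv, mul_assoc, mul_inv_rev]
        rw [this]; exact hxy
      have h5 : ((x * z, y * z) : H × H) ∈
          (fun p : H × H => p.2 / p.1) ⁻¹' V := hz
      have := hVsub h5
      exact le_trans (min_le_left _ _) (le_of_lt this)
    have : d x y ≤ ε/2 := ciSup_le hall
    linarith
  have h_big : ∀ V ∈ 𝓝 (1:H), ∃ ε > (0:ℝ), ∀ x y : H, d x y < ε → y / x ∈ V := by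
    intro V hV
    have hmem : (fun p : H × H => p.2 / p.1) ⁻¹' V ∈
        comap (fun p : H × H => p.2 / p.1) (𝓝 (1:H)) := preimage_mem_comap hV
    obtain ⟨ε, hε, hsub⟩ := hb.mem_iff.1 hmem
    refine ⟨min ε 1, lt_min hε one_pos, fun x y hxy => ?_⟩
    have h1 : min (ρ (x * 1) (y * 1)) 1 ≤ d x y := hle x y 1
    rw [mul_one, mul_one] at h1
    have h2 : min (ρ x y) 1 < min ε 1 := lt_of_le_of_lt h1 hxy
    have h3 : ρ x y < ε := by
      rcases le_total (ρ x y) 1 with h | h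
      · rw [min_eq_left h] at h2; exact lt_of_lt_of_le h2 (min_le_left _ _)
      · rw [min_eq_right h] at h2; exact absurd h2 (not_lt.2 (min_le_right _ _))
    exact hsub (show ((x, y) : H × H) ∈ {p : H × H | ρ p.1 p.2 < ε} from h3)
  have h_pos : ∀ x y : H, x ≠ y → 0 < d x y := by
    intro x y hxy
    have hne : y / x ≠ 1 := by
      simp only [ne_eq, div_eq_one]
      exact fun h => hxy h.symm
    have hV : ({y / x}ᶜ : Set H) ∈ 𝓝 (1:H) :=
      (isOpen_compl_singleton).mem_nhds (by simpa using hne.symm)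
    obtain ⟨ε, hε, h⟩ := h_big _ hV
    by_contra hcon
    push_neg at hcon
    have : d x y = 0 := le_antisymm hcon (h_nonneg x y)
    have := h x y (by rw [this]; exact hε)
    simp at this
  exact ⟨⟨d, h_nonneg, h_refl, h_symm, h_tri, h_le_one, h_rinv, h_small, h_big, h_pos⟩⟩

namespace GoodMetric

variable {H : Type u} [TopologicalSpace H] [Group H] [IsTopologicalGroup H]
variable (D : GoodMetric H)

theorem abs_sub_le_d (a b y : H) : |D.d a y - D.d b y| ≤ D.d a b := by
  rw [abs_sub_le_iff]
  constructor
  · have := D.triangle a b y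
    linarith
  · have := D.triangle b a y
    have h2 := D.symm b a
    linarith

/-- The basic embedding `a ↦ d(a, ·)` into bounded continuous functions. -/
noncomputable def phi (a : H) : H →ᵇ ℝ :=
  BoundedContinuousFunction.mkOfBound
    ⟨fun y => D.d a y, by
      rw [continuous_iff_continuousAt]
      intro y₀
      rw [ContinuousAt, Metric.tendsto_nhds]
      intro ε hε
      obtain ⟨V, hV, hsmall⟩ := D.small ε hε
      have hmem : {y : H | y / y₀ ∈ V} ∈ 𝓝 y₀ := by
        have hc : Continuous fun y : H => y / y₀ := continuous_id.div' continuous_const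
        have := hc.continuousAt (x := y₀)
        have h1 : V ∈ 𝓝 (y₀ / y₀) := by simpa using hV
        exact this.preimage_mem_nhds h1
      filter_upwards [hmem] with y hy
      rw [Real.dist_eq]
      have h1 : |D.d a y - D.d a y₀| ≤ D.d y₀ y := by
        rw [abs_sub_le_iff]
        constructor
        · linarith [D.triangle a y₀ y, D.symm y₀ y]
        · linarith [D.triangle a y y₀, D.symm y y₀]
      exact lt_of_le_of_lt h1 (hsmall y₀ y hy)⟩
    1
    (by
      intro x y
      rw [Real.dist_eq, abs_sub_le_iff]
      constructor
      · exact sub_le_iff_le_add.2 (le_trans (D.le_one a x)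
          (le_add_of_nonneg_right (D.nonneg a y)))
      · exact sub_le_iff_le_add.2 (le_trans (D.le_one a y)
          (le_add_of_nonneg_right (D.nonneg a x))))

@[simp] theorem phi_apply (a y : H) : D.phi a y = D.d a y := rfl

theorem norm_phi_sub_le (a b : H) : ‖D.phi a - D.phi b‖ ≤ D.d a b := by
  rw [BoundedContinuousFunction.norm_le (D.nonneg a b)]
  intro y
  simp only [BoundedContinuousFunction.coe_sub, Pi.sub_apply, phi_apply, Real.norm_eq_abs]
  exact D.abs_sub_le_d a b y

theorem d_le_norm_phi_sub (a b : H) : D.d a b ≤ ‖D.phi a - D.phi b‖ := by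
  have h := BoundedContinuousFunction.norm_coe_le_norm (D.phi a - D.phi b) b
  simp only [BoundedContinuousFunction.coe_sub, Pi.sub_apply, phi_apply, Real.norm_eq_abs,
    D.refl b, sub_zero] at h
  exact le_trans (le_abs_self _) h

theorem phi_injective : Function.Injective D.phi := by
  intro a b hab
  by_contra hne
  have h1 := D.d_le_norm_phi_sub a b
  rw [hab, sub_self, norm_zero] at h1
  exact absurd (le_antisymm h1 (D.nonneg a b)) (ne_of_gt (D.pos a b hne))

theorem phi_continuous : Continuous D.phi := by
  rw [continuous_iff_continuousAt]
  intro a₀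
  rw [ContinuousAt, Metric.tendsto_nhds]
  intro ε hε
  obtain ⟨V, hV, hsmall⟩ := D.small ε hε
  have hmem : {a : H | a / a₀ ∈ V} ∈ 𝓝 a₀ := by
    have hc : Continuous fun a : H => a / a₀ := continuous_id.div' continuous_const
    exact hc.continuousAt.preimage_mem_nhds (by simpa using hV)
  filter_upwards [hmem] with a ha
  rw [dist_eq_norm]
  exact lt_of_le_of_lt (D.norm_phi_sub_le a a₀) (by rw [D.symm]; exact hsmall a₀ a ha)

theorem phi_isInducing : Topology.IsInducing D.phi := by
  rw [Topology.isInducing_iff_nhds]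
  intro a
  refine le_antisymm (Filter.Tendsto.le_comap (D.phi_continuous.tendsto a)) ?_
  intro U hU
  have hVmem : (fun b : H => b * a) ⁻¹' U ∈ 𝓝 (1:H) :=
    (continuous_mul_right a).continuousAt.preimage_mem_nhds (by simpa using hU)
  obtain ⟨ε, hε, hbig⟩ := D.big _ hVmem
  refine mem_comap.2 ⟨Metric.ball (D.phi a) ε, Metric.ball_mem_nhds _ hε, ?_⟩
  intro b hb
  simp only [Set.mem_preimage, Metric.mem_ball] at hb
  have hd : D.d a b < ε := by
    refine lt_of_le_of_lt (le_trans (D.d_le_norm_phi_sub a b) ?_) hb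
    rw [dist_eq_norm, norm_sub_rev]
  have := hbig a b hd
  simpa [div_mul_cancel] using this

/-- Right translation as a continuous map. -/
def rmul (g : H) : C(H, H) := ⟨fun y => y * g, continuous_mul_right g⟩

/-- The left regular representation on bounded continuous functions,
`(A g f)(y) = f (y * g)`, as a linear isometric equivalence. -/
noncomputable def A (g : H) : (H →ᵇ ℝ) ≃ₗᵢ[ℝ] (H →ᵇ ℝ) where
  toLinearEquiv :=
  { toFun := fun f => f.compContinuous (rmul (H := H) g)
    map_add' := fun f₁ f₂ => by ext y; simp [rmul]
    map_smul' := fun c f => by ext y; simp [rmul]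
    invFun := fun f => f.compContinuous (rmul (H := H) g⁻¹)
    left_inv := fun f => by ext y; simp [rmul, mul_assoc]
    right_inv := fun f => by ext y; simp [rmul, mul_assoc] }
  norm_map' := fun f => by
    refine le_antisymm ?_ ?_
    · rw [BoundedContinuousFunction.norm_le (norm_nonneg f)]
      intro y
      exact BoundedContinuousFunction.norm_coe_le_norm f _
    · rw [BoundedContinuousFunction.norm_le (norm_nonneg _)]
      intro y
      have := BoundedContinuousFunction.norm_coe_le_norm
        (f.compContinuous (rmul (H := H) g)) (y * g⁻¹)
      simpa [rmul, mul_assoc] using this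

variable {D} in
theorem A_apply (g : H) (f : H →ᵇ ℝ) (y : H) : A g f y = f (y * g) := rfl

theorem A_phi (g a : H) : A g (D.phi a) = D.phi (a * g⁻¹) := by
  ext y
  rw [A_apply, phi_apply, phi_apply]
  have := D.rightInv (a * g⁻¹) y g
  simpa [mul_assoc] using this

theorem A_mul_apply (g h : H) (f : H →ᵇ ℝ) : A (g * h) f = A g (A h f) := by
  ext y
  simp [A_apply, mul_assoc]

/-- The separable Banach space: closed linear span of the image of `phi`. -/
noncomputable def E : Submodule ℝ (H →ᵇ ℝ) :=
  (Submodule.span ℝ (Set.range D.phi)).topologicalClosure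

theorem phi_mem_E (a : H) : D.phi a ∈ D.E :=
  Submodule.le_topologicalClosure _ (Submodule.subset_span ⟨a, rfl⟩)

theorem A_mapsTo (g : H) : Set.MapsTo (A (H := H) g) (D.E : Set (H →ᵇ ℝ)) (D.E : Set (H →ᵇ ℝ)) := by
  have h1 : Set.MapsTo (A (H := H) g) (Submodule.span ℝ (Set.range D.phi) : Set (H →ᵇ ℝ))
      (Submodule.span ℝ (Set.range D.phi) : Set (H →ᵇ ℝ)) := by
    intro f hf
    have := Submodule.map_span ((A (H := H) g).toLinearEquiv.toLinearMap) (Set.range D.phi)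
    have hmem : (A (H := H) g) f ∈ Submodule.map ((A (H := H) g).toLinearEquiv.toLinearMap)
        (Submodule.span ℝ (Set.range D.phi)) := ⟨f, hf, rfl⟩
    rw [this] at hmem
    refine Submodule.span_le.2 ?_ hmem
    rintro _ ⟨_, ⟨a, rfl⟩, rfl⟩
    have : (A (H := H) g) (D.phi a) = D.phi (a * g⁻¹) := D.A_phi g a
    exact this ▸ Submodule.subset_span ⟨a * g⁻¹, rfl⟩
  have h2 := h1.closure (A (H := H) g).continuous
  intro f hf
  rw [show (D.E : Set (H →ᵇ ℝ)) = closure (Submodule.span ℝ (Set.range D.phi) : Set (H →ᵇ ℝ))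
    from Submodule.topologicalClosure_coe _] at hf ⊢
  exact h2 hf

/-- The representation restricted to `E`. -/
noncomputable def theta (g : H) : D.E ≃ₗᵢ[ℝ] D.E where
  toLinearEquiv :=
  { toFun := fun x => ⟨A g x, D.A_mapsTo g x.2⟩
    map_add' := fun x y => Subtype.ext (by simp)
    map_smul' := fun c x => Subtype.ext (by simp)
    invFun := fun x => ⟨A g⁻¹ x, D.A_mapsTo g⁻¹ x.2⟩
    left_inv := fun x => Subtype.ext (by
      show A g⁻¹ (A g (x : H →ᵇ ℝ)) = (x : H →ᵇ ℝ)
      rw [← A_mul_apply, inv_mul_cancel]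
      ext y; simp [A_apply])
    right_inv := fun x => Subtype.ext (by
      show A g (A g⁻¹ (x : H →ᵇ ℝ)) = (x : H →ᵇ ℝ)
      rw [← A_mul_apply, mul_inv_cancel]
      ext y; simp [A_apply]) }
  norm_map' := fun x => by
    show ‖(⟨A g x, D.A_mapsTo g x.2⟩ : D.E)‖ = ‖x‖
    have h1 : ‖(⟨A g x, D.A_mapsTo g x.2⟩ : D.E)‖ = ‖A g (x : H →ᵇ ℝ)‖ := rfl
    rw [h1, (A (H := H) g).norm_map]
    rfl

theorem theta_coe (g : H) (x : D.E) : ((D.theta g x : D.E) : H →ᵇ ℝ) = A g (x : H →ᵇ ℝ) := rfl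

theorem theta_mul (g h : H) : D.theta (g * h) = D.theta g * D.theta h := by
  refine LinearIsometryEquiv.ext fun x => ?_
  apply Subtype.ext
  show A (g * h) (x : H →ᵇ ℝ) = ((D.theta g (D.theta h x) : D.E) : H →ᵇ ℝ)
  rw [theta_coe, theta_coe, A_mul_apply]

theorem theta_injective : Function.Injective D.theta := by
  intro g h hgh
  have h1 := congrArg (fun T : D.E ≃ₗᵢ[ℝ] D.E =>
    ((T ⟨D.phi 1, D.phi_mem_E 1⟩ : D.E) : H →ᵇ ℝ)) hgh
  simp only [theta_coe] at h1
  rw [D.A_phi g 1, D.A_phi h 1, one_mul, one_mul] at h1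
  have := D.phi_injective h1
  exact inv_injective this

theorem continuous_A_apply (f : H →ᵇ ℝ) (hf : f ∈ D.E) :
    Continuous fun g : H => A (H := H) g f := by
  have hspan : ∀ w ∈ Submodule.span ℝ (Set.range D.phi),
      Continuous fun g : H => A (H := H) g w := by
    intro w hw
    induction hw using Submodule.span_induction with
    | mem w hw =>
      obtain ⟨a, rfl⟩ := hw
      have heq : (fun g : H => A (H := H) g (D.phi a)) = fun g => D.phi (a * g⁻¹) :=
        funext fun g => D.A_phi g a
      rw [heq]
      exact D.phi_continuous.comp (continuous_const.mul continuous_inv)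
    | zero =>
      have heq : (fun g : H => A (H := H) g (0 : H →ᵇ ℝ)) = fun _ => (0 : H →ᵇ ℝ) :=
        funext fun g => map_zero (A (H := H) g)
      rw [heq]; exact continuous_const
    | add w₁ w₂ _ _ h1 h2 =>
      have heq : (fun g : H => A (H := H) g (w₁ + w₂))
          = fun g => A (H := H) g w₁ + A (H := H) g w₂ :=
        funext fun g => map_add (A (H := H) g) w₁ w₂
      rw [heq]; exact h1.add h2
    | smul c w _ h1 =>
      have heq : (fun g : H => A (H := H) g (c • w)) = fun g => c • A (H := H) g w :=
        funext fun g => map_smul (A (H := H) g) c w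
      rw [heq]; exact h1.const_smul c
  rw [continuous_iff_continuousAt]
  intro g₀
  rw [ContinuousAt, Metric.tendsto_nhds]
  intro ε hε
  have hf' : f ∈ closure (Submodule.span ℝ (Set.range D.phi) : Set (H →ᵇ ℝ)) := by
    rw [← Submodule.topologicalClosure_coe]; exact hf
  obtain ⟨w, hw, hwf⟩ := Metric.mem_closure_iff.1 hf' (ε/3) (by linarith)
  have hcw : Continuous fun g : H => A (H := H) g w := hspan w hw
  have hev : ∀ᶠ g in 𝓝 g₀, dist (A (H := H) g w) (A (H := H) g₀ w) < ε/3 := by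
    have := hcw.continuousAt (x := g₀)
    rw [ContinuousAt, Metric.tendsto_nhds] at this
    exact this (ε/3) (by linarith)
  filter_upwards [hev] with g hg
  have h1 : dist (A (H := H) g f) (A (H := H) g w) = dist f w := (A (H := H) g).dist_map f w
  have h2 : dist (A (H := H) g₀ w) (A (H := H) g₀ f) = dist w f := (A (H := H) g₀).dist_map w f
  calc dist (A (H := H) g f) (A (H := H) g₀ f)
      ≤ dist (A (H := H) g f) (A (H := H) g w) + dist (A (H := H) g w) (A (H := H) g₀ w)
        + dist (A (H := H) g₀ w) (A (H := H) g₀ f) := dist_triangle4 _ _ _ _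
    _ < ε/3 + ε/3 + ε/3 := by
        rw [h1, h2, dist_comm w f]
        exact add_lt_add (add_lt_add hwf hg) hwf
    _ = ε := by ring

instance : CompleteSpace D.E :=
  (Submodule.isClosed_topologicalClosure _).completeSpace_coe

theorem E_separable [TopologicalSpace.SeparableSpace H] :
    TopologicalSpace.SeparableSpace D.E := by
  have h1 : TopologicalSpace.IsSeparable (Set.range D.phi) :=
    TopologicalSpace.isSeparable_range D.phi_continuous
  have h2 : TopologicalSpace.IsSeparable
      (Submodule.span ℝ (Set.range D.phi) : Set (H →ᵇ ℝ)) := h1.span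
  have h3 := h2.closure
  rw [← Submodule.topologicalClosure_coe] at h3
  exact h3.separableSpace

theorem theta_isEmbedding :
    @Topology.IsEmbedding H (D.E ≃ₗᵢ[ℝ] D.E) _ (linIsoPtTop D.E) D.theta := by
  have hcontΨ : Continuous fun g : H => (⇑(D.theta g) : D.E → D.E) := by
    refine continuous_pi fun v => ?_
    show Continuous fun g : H => D.theta g v
    have hA := D.continuous_A_apply (v : H →ᵇ ℝ) v.2
    exact Continuous.subtype_mk hA _
  have hπ : Continuous (fun F : D.E → D.E => ((F ⟨D.phi 1, D.phi_mem_E 1⟩ : D.E) : H →ᵇ ℝ)) :=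
    continuous_subtype_val.comp (continuous_apply _)
  have hcomp : (fun F : D.E → D.E => ((F ⟨D.phi 1, D.phi_mem_E 1⟩ : D.E) : H →ᵇ ℝ))
      ∘ (fun g : H => (⇑(D.theta g) : D.E → D.E)) = D.phi ∘ (fun g : H => g⁻¹) := by
    funext g
    show ((D.theta g ⟨D.phi 1, D.phi_mem_E 1⟩ : D.E) : H →ᵇ ℝ) = D.phi g⁻¹
    rw [D.theta_coe]
    show A g (D.phi 1) = D.phi g⁻¹
    rw [D.A_phi, one_mul]
  have hindcomp : Topology.IsInducing
      ((fun F : D.E → D.E => ((F ⟨D.phi 1, D.phi_mem_E 1⟩ : D.E) : H →ᵇ ℝ))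
        ∘ (fun g : H => (⇑(D.theta g) : D.E → D.E))) := by
    rw [hcomp]
    exact D.phi_isInducing.comp (Homeomorph.inv H).isInducing
  have hΨind : Topology.IsInducing (fun g : H => (⇑(D.theta g) : D.E → D.E)) :=
    Topology.IsInducing.of_comp hcontΨ hπ hindcomp
  refine @Topology.IsEmbedding.mk _ _ _ (linIsoPtTop D.E) _ (@Topology.IsInducing.mk _ _ _ (linIsoPtTop D.E) _ ?_) D.theta_injective
  rw [show linIsoPtTop D.E
      = TopologicalSpace.induced (fun φ : D.E ≃ₗᵢ[ℝ] D.E => (φ : D.E → D.E))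
        inferInstance from rfl,
    induced_compose]
  exact hΨind.eq_induced

end GoodMetric


/-- Teleman's theorem: every Polish group embeds homeomorphically, via an injective
group homomorphism, into the group of surjective linear isometries of some separable real
Banach space, with the topology of pointwise convergence. -/
theorem teleman_polish_group_embeds (H : Type u) [TopologicalSpace H] [Group H]
    [IsTopologicalGroup H] [PolishSpace H] :
    ∃ (E : Type u) (_ : NormedAddCommGroup E) (_ : NormedSpace ℝ E) (_ : CompleteSpace E),
      TopologicalSpace.SeparableSpace E ∧
      ∃ Θ : H → (E ≃ₗᵢ[ℝ] E),
        Function.Injective Θ ∧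
        (∀ g h : H, Θ (g * h) = Θ g * Θ h) ∧
        @Topology.IsEmbedding _ _ _ (linIsoPtTop E) Θ := by
  obtain ⟨D⟩ := exists_goodMetric H
  exact ⟨D.E, inferInstance, inferInstance, inferInstance, D.E_separable, D.theta,
    D.theta_injective, D.theta_mul, D.theta_isEmbedding⟩
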